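/- arXiv:1212.6227 — 5 statements merged into one kernel-verified Lean document; each statement's English description precedes it below -/
import Mathlib

section
/- Let R be an algebraic Kähler curvature tensor on ℂⁿ with nonnegative holomorphic bisectional curvature, and let V, W ∈ ℂⁿ satisfy R(V, V̄, W, W̄) = 0. Then for every Z ∈ ℂⁿ one has R(V, Z̄, W, W̄) = 0 and R(V, V̄, W, Z̄) = 0. -/
open scoped ComplexOrder

/-- The quadrilinear form `R(V, W̄, X, Ȳ) = Σ R_{ij̄kl̄} V^i conj(W^j) X^k conj(Y^l)`
associated to an algebraic Kähler curvature tensor `R` on `ℂⁿ`. -/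
noncomputable def kahlerQuad {n : ℕ} (R : Fin n → Fin n → Fin n → Fin n → ℂ)
    (V W X Y : Fin n → ℂ) : ℂ :=
  ∑ i, ∑ j, ∑ k, ∑ l,
    R i j k l * V i * (starRingEnd ℂ) (W j) * X k * (starRingEnd ℂ) (Y l)

/-- First-variation lemma for a nonnegative (in `ComplexOrder`) Hermitian sesquilinear form:
if `B V V = 0` then `B V Z = 0` for all `Z`. -/
lemma key_herm {α : Type*} [AddCommGroup α] [Module ℂ α]
    (B : α → α → ℂ)
    (hadd1 : ∀ x y z, B (x + y) z = B x z + B y z)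
    (hadd2 : ∀ x y z, B x (y + z) = B x y + B x z)
    (hsmul1 : ∀ (c : ℂ) x y, B (c • x) y = c * B x y)
    (hsmul2 : ∀ (c : ℂ) x y, B x (c • y) = (starRingEnd ℂ) c * B x y)
    (hconj : ∀ x y, (starRingEnd ℂ) (B x y) = B y x)
    (hpos : ∀ x, 0 ≤ B x x)
    (V : α) (hV : B V V = 0) (Z : α) : B V Z = 0 := by
  set c := B V Z with hc
  set b := B Z Z with hb
  have hbpos := hpos Z
  rw [Complex.le_def] at hbpos
  have hbre : 0 ≤ b.re := by simpa using hbpos.1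
  have hbim : b.im = 0 := by simpa using hbpos.2.symm
  set s : ℝ := 1 / (b.re + 1) with hs
  have hspos : 0 < s := by positivity
  set N : ℝ := Complex.normSq c with hN
  have hNc : c * (starRingEnd ℂ) c = (N : ℂ) := Complex.mul_conj c
  have hZV : B Z V = (starRingEnd ℂ) c := by rw [← hconj V Z]
  set t : ℂ := -(s : ℂ) * c with ht
  have key_eq : B (V + t • Z) (V + t • Z)
      = ((-2 * (s * N) : ℝ) : ℂ) + ((s ^ 2 * N : ℝ) : ℂ) * b := by
    rw [hadd1, hadd2, hadd2, hsmul1, hsmul2, hsmul2, hsmul1, hV, hZV, ← hc, ← hb, ht]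
    simp only [map_mul, map_neg, Complex.conj_ofReal]
    push_cast
    linear_combination (-2 * (s : ℂ) + (s : ℂ) ^ 2 * b) * hNc
  have hge := hpos (V + t • Z)
  rw [key_eq, Complex.le_def] at hge
  have h1 : (0:ℝ) ≤ -2 * (s * N) + s ^ 2 * N * b.re := by
    have := hge.1
    simpa [Complex.add_re, Complex.mul_re, hbim, ← Complex.ofReal_pow] using this
  have hbne : b.re + 1 ≠ 0 := by positivity
  have hsb : s * b.re = 1 - s := by rw [hs]; field_simp; ring
  have h2 : s ^ 2 * N * b.re = (1 - s) * (s * N) := by linear_combination (s * N) * hsb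
  have hNle : N ≤ 0 := by
    by_contra hlt
    push_neg at hlt
    nlinarith [mul_pos hspos hlt, mul_nonneg (mul_nonneg hspos.le hspos.le) hlt.le]
  have hNz : N = 0 := le_antisymm hNle (Complex.normSq_nonneg c)
  have : c = 0 := by
    rw [← Complex.normSq_eq_zero]; exact hNz
  exact this

lemma kahlerQuad_eq {n : ℕ} (R : Fin n → Fin n → Fin n → Fin n → ℂ)
    (V W X Y : Fin n → ℂ) :
    kahlerQuad R V W X Y = ∑ p : Fin n × Fin n × Fin n × Fin n,
      R p.1 p.2.1 p.2.2.1 p.2.2.2 * V p.1 * (starRingEnd ℂ) (W p.2.1) * X p.2.2.1 *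
        (starRingEnd ℂ) (Y p.2.2.2) := by
  simp [kahlerQuad, Fintype.sum_prod_type]

section lems
variable {n : ℕ} (R : Fin n → Fin n → Fin n → Fin n → ℂ)

lemma kq_add1 (x x' y z w : Fin n → ℂ) :
    kahlerQuad R (x + x') y z w = kahlerQuad R x y z w + kahlerQuad R x' y z w := by
  simp [kahlerQuad_eq, ← Finset.sum_add_distrib]
  exact Finset.sum_congr rfl fun p _ => by ring

lemma kq_add2 (x y y' z w : Fin n → ℂ) :
    kahlerQuad R x (y + y') z w = kahlerQuad R x y z w + kahlerQuad R x y' z w := by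
  simp [kahlerQuad_eq, ← Finset.sum_add_distrib, map_add]
  exact Finset.sum_congr rfl fun p _ => by ring

lemma kq_add3 (x y z z' w : Fin n → ℂ) :
    kahlerQuad R x y (z + z') w = kahlerQuad R x y z w + kahlerQuad R x y z' w := by
  simp [kahlerQuad_eq, ← Finset.sum_add_distrib]
  exact Finset.sum_congr rfl fun p _ => by ring

lemma kq_add4 (x y z w w' : Fin n → ℂ) :
    kahlerQuad R x y z (w + w') = kahlerQuad R x y z w + kahlerQuad R x y z w' := by
  simp [kahlerQuad_eq, ← Finset.sum_add_distrib, map_add]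
  exact Finset.sum_congr rfl fun p _ => by ring

lemma kq_smul1 (c : ℂ) (x y z w : Fin n → ℂ) :
    kahlerQuad R (c • x) y z w = c * kahlerQuad R x y z w := by
  simp only [kahlerQuad_eq, Pi.smul_apply, smul_eq_mul, Finset.mul_sum]
  exact Finset.sum_congr rfl fun p _ => by ring

lemma kq_smul2 (c : ℂ) (x y z w : Fin n → ℂ) :
    kahlerQuad R x (c • y) z w = (starRingEnd ℂ) c * kahlerQuad R x y z w := by
  simp only [kahlerQuad_eq, Pi.smul_apply, smul_eq_mul, Finset.mul_sum, map_mul]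
  exact Finset.sum_congr rfl fun p _ => by ring

lemma kq_smul3 (c : ℂ) (x y z w : Fin n → ℂ) :
    kahlerQuad R x y (c • z) w = c * kahlerQuad R x y z w := by
  simp only [kahlerQuad_eq, Pi.smul_apply, smul_eq_mul, Finset.mul_sum]
  exact Finset.sum_congr rfl fun p _ => by ring

lemma kq_smul4 (c : ℂ) (x y z w : Fin n → ℂ) :
    kahlerQuad R x y z (c • w) = (starRingEnd ℂ) c * kahlerQuad R x y z w := by
  simp only [kahlerQuad_eq, Pi.smul_apply, smul_eq_mul, Finset.mul_sum, map_mul]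
  exact Finset.sum_congr rfl fun p _ => by ring

lemma kq_conj (hreal : ∀ i j k l, R i j k l = (starRingEnd ℂ) (R j i l k))
    (x y z w : Fin n → ℂ) :
    (starRingEnd ℂ) (kahlerQuad R x y z w) = kahlerQuad R y x w z := by
  have hreal' : ∀ i j k l, (starRingEnd ℂ) (R i j k l) = R j i l k := by
    intro i j k l
    rw [hreal j i l k]
  rw [kahlerQuad_eq, kahlerQuad_eq, map_sum]
  refine Fintype.sum_equiv
    ⟨fun p => (p.2.1, p.1, p.2.2.2, p.2.2.1), fun p => (p.2.1, p.1, p.2.2.2, p.2.2.1),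
      fun p => rfl, fun p => rfl⟩ _ _ fun p => ?_
  simp only [map_mul, hreal', Equiv.coe_fn_mk, Complex.conj_conj]
  ring
end lems

/-- Let `R` be an algebraic Kähler curvature tensor on `ℂⁿ` with nonnegative
holomorphic bisectional curvature, and let `V, W ∈ ℂⁿ` satisfy `R(V, V̄, W, W̄) = 0`.
Then for every `Z ∈ ℂⁿ` one has `R(V, Z̄, W, W̄) = 0` and `R(V, V̄, W, Z̄) = 0`. -/
theorem kahlerQuad_eq_zero_of_bisectional_zero
    {n : ℕ} (R : Fin n → Fin n → Fin n → Fin n → ℂ)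
    (hsym1 : ∀ i j k l, R i j k l = R k j i l)
    (hsym2 : ∀ i j k l, R i j k l = R i l k j)
    (hreal : ∀ i j k l, R i j k l = (starRingEnd ℂ) (R j i l k))
    (hnonneg : ∀ V W : Fin n → ℂ, 0 ≤ kahlerQuad R V V W W)
    (V W : Fin n → ℂ) (hVW : kahlerQuad R V V W W = 0) :
    ∀ Z : Fin n → ℂ, kahlerQuad R V Z W W = 0 ∧ kahlerQuad R V V W Z = 0 := by
  intro Z
  constructor
  · exact key_herm (fun x y => kahlerQuad R x y W W)
      (fun x y z => kq_add1 R x y z W W)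
      (fun x y z => kq_add2 R x y z W W)
      (fun c x y => kq_smul1 R c x y W W)
      (fun c x y => kq_smul2 R c x y W W)
      (fun x y => kq_conj R hreal x y W W)
      (fun x => hnonneg x W) V hVW Z
  · exact key_herm (fun x y => kahlerQuad R V V x y)
      (fun x y z => kq_add3 R V V x y z)
      (fun x y z => kq_add4 R V V x y z)
      (fun c x y => kq_smul3 R c V V x y)
      (fun c x y => kq_smul4 R c V V x y)
      (fun x y => kq_conj R hreal V V x y)
      (fun x => hnonneg V x) W hVW Z
end

section
/- Let R be an algebraic Kähler curvature tensor on ℂⁿ with nonnegative orthogonal bisectional curvature. Let E₁, E₂ ∈ ℂⁿ be unit vectors with ⟨E₁, E₂⟩ = 0 and suppose R(E₁, Ē₁, E₂, Ē₂) = 0. Then for every Z ∈ ℂⁿ with ⟨Z, E₁⟩ = 0 one has R(E₁, Ē₁, E₂, Z̄) = 0, and for every Z ∈ ℂⁿ with ⟨Z, E₂⟩ = 0 one has R(E₂, Ē₂, E₁, Z̄) = 0. -/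
open scoped ComplexOrder

/-- The standard Hermitian inner product `⟨V, W⟩ = Σ_i V^i conj(W^i)` on `ℂⁿ`. -/
noncomputable def hermInner {n : ℕ} (V W : Fin n → ℂ) : ℂ :=
  ∑ i, V i * (starRingEnd ℂ) (W i)


lemma hermInner_conj {n : ℕ} (V W : Fin n → ℂ) :
    hermInner V W = (starRingEnd ℂ) (hermInner W V) := by
  simp [hermInner, map_sum, map_mul, mul_comm]

lemma quad_expand {n : ℕ} (R : Fin n → Fin n → Fin n → Fin n → ℂ)
    (E W Z : Fin n → ℂ) (t : ℂ) :
    kahlerQuad R E E (fun i => W i + t * Z i) (fun i => W i + t * Z i)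
      = kahlerQuad R E E W W + t * kahlerQuad R E E Z W
        + (starRingEnd ℂ) t * kahlerQuad R E E W Z
        + t * (starRingEnd ℂ) t * kahlerQuad R E E Z Z := by
  simp only [kahlerQuad, map_add, map_mul, Finset.mul_sum, ← Finset.sum_add_distrib]
  refine Finset.sum_congr rfl fun i _ => Finset.sum_congr rfl fun j _ =>
    Finset.sum_congr rfl fun k _ => Finset.sum_congr rfl fun l _ => ?_
  ring

lemma key {n : ℕ} (R : Fin n → Fin n → Fin n → Fin n → ℂ)
    (E W Z : Fin n → ℂ)
    (hEW : hermInner E W = 0) (hEZ : hermInner E Z = 0)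
    (hnn : ∀ X, hermInner E X = 0 → 0 ≤ kahlerQuad R E E X X)
    (h0 : kahlerQuad R E E W W = 0) :
    kahlerQuad R E E W Z = 0 := by
  set B := kahlerQuad R E E W Z with hBdef
  set D := kahlerQuad R E E Z W with hDdef
  set C := kahlerQuad R E E Z Z with hCdef
  have hC : 0 ≤ C := hnn Z hEZ
  have hCim : C.im = 0 := by
    rw [Complex.le_def] at hC; exact hC.2.symm
  have hCre : 0 ≤ C.re := by
    rw [Complex.le_def] at hC; simpa using hC.1
  have ht : ∀ t : ℂ, 0 ≤ t * D + (starRingEnd ℂ) t * B + t * (starRingEnd ℂ) t * C := by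
    intro t
    have h1 : hermInner E (fun i => W i + t * Z i) = 0 := by
      simp only [hermInner, map_add, map_mul, mul_add, Finset.sum_add_distrib] at *
      rw [hEW]
      simp only [show ∀ i : Fin n, E i * ((starRingEnd ℂ) t * (starRingEnd ℂ) (Z i))
          = (starRingEnd ℂ) t * (E i * (starRingEnd ℂ) (Z i)) from fun i => by ring,
        ← Finset.mul_sum, hEZ]
      ring
    have h2 := hnn _ h1
    rw [quad_expand, h0, zero_add] at h2
    exact h2
  -- derive D = conj B
  have h1 := ht 1
  have hI := ht Complex.I
  rw [Complex.le_def] at h1 hI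
  have e1 : (1 * D + (starRingEnd ℂ) 1 * B + 1 * (starRingEnd ℂ) 1 * C).im
      = D.im + B.im + C.im := by simp
  have e2 : (Complex.I * D + (starRingEnd ℂ) Complex.I * B
      + Complex.I * (starRingEnd ℂ) Complex.I * C).im = D.re - B.re + C.im := by
    simp [Complex.conj_I, Complex.add_im, Complex.mul_im]
    ring
  have him : D.im = -B.im := by
    have := h1.2.symm
    rw [e1, hCim] at this
    simp only [Complex.zero_im] at this
    linarith
  have hre : D.re = B.re := by
    have := hI.2.symm
    rw [e2, hCim] at this
    simp only [Complex.zero_im] at this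
    linarith
  have hD : D = (starRingEnd ℂ) B := by
    apply Complex.ext <;> simp [hre, him]
  by_contra hB
  have hnB : 0 < Complex.normSq B := by
    simpa [Complex.normSq_pos] using hB
  set c := C.re with hcdef
  set s : ℝ := 1 / (c + 1) with hsdef
  have hc1 : (0:ℝ) < c + 1 := by linarith
  have hs : 0 < s := by positivity
  have h3 := ht (-(s:ℂ) * B)
  rw [Complex.le_def] at h3
  have e3 : ((-(s:ℂ) * B) * D + (starRingEnd ℂ) (-(s:ℂ) * B) * B
      + (-(s:ℂ) * B) * (starRingEnd ℂ) (-(s:ℂ) * B) * C).re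
      = -2 * s * Complex.normSq B + s^2 * Complex.normSq B * c := by
    rw [hD]
    have : (-(s:ℂ) * B) * (starRingEnd ℂ) B + (starRingEnd ℂ) (-(s:ℂ) * B) * B
        + (-(s:ℂ) * B) * (starRingEnd ℂ) (-(s:ℂ) * B) * C
        = (-2 * s * Complex.normSq B : ℝ) + ((s^2 * Complex.normSq B : ℝ) : ℂ) * C := by
      simp only [map_mul, map_neg, Complex.conj_ofReal]
      rw [show ((-2 * s * Complex.normSq B : ℝ) : ℂ)
          = -2 * (s:ℂ) * (B * (starRingEnd ℂ) B) by
          rw [Complex.mul_conj]; push_cast; ring,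
        show ((s^2 * Complex.normSq B : ℝ) : ℂ) = (s:ℂ)^2 * (B * (starRingEnd ℂ) B) by
          rw [Complex.mul_conj]; push_cast; ring]
      ring
    rw [this]
    simp only [Complex.add_re, Complex.mul_re, Complex.ofReal_re, Complex.ofReal_im, hCim]
    ring
  have h4 : (0:ℝ) ≤ -2 * s * Complex.normSq B + s^2 * Complex.normSq B * c := by
    rw [← e3]; simpa using h3.1
  have hsc : s * c < 1 := by
    rw [hsdef]
    rw [div_mul_eq_mul_div, div_lt_one hc1]
    linarith
  nlinarith [mul_pos hs hnB, mul_pos (mul_pos hs hs) hnB]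

lemma sum4 {n : ℕ} {M : Type*} [AddCommMonoid M] (f : Fin n → Fin n → Fin n → Fin n → M) :
    ∑ i, ∑ j, ∑ k, ∑ l, f i j k l = ∑ k, ∑ l, ∑ i, ∑ j, f i j k l := by
  calc ∑ i, ∑ j, ∑ k, ∑ l, f i j k l
      = ∑ i, ∑ k, ∑ j, ∑ l, f i j k l :=
        Finset.sum_congr rfl fun i _ => Finset.sum_comm
    _ = ∑ k, ∑ i, ∑ j, ∑ l, f i j k l := Finset.sum_comm
    _ = ∑ k, ∑ i, ∑ l, ∑ j, f i j k l :=
        Finset.sum_congr rfl fun k _ => Finset.sum_congr rfl fun i _ => Finset.sum_comm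
    _ = ∑ k, ∑ l, ∑ i, ∑ j, f i j k l :=
        Finset.sum_congr rfl fun k _ => Finset.sum_comm

lemma quad_swap {n : ℕ} (R : Fin n → Fin n → Fin n → Fin n → ℂ)
    (hsym1 : ∀ i j k l, R i j k l = R k j i l)
    (hsym2 : ∀ i j k l, R i j k l = R i l k j)
    (V W : Fin n → ℂ) :
    kahlerQuad R V V W W = kahlerQuad R W W V V := by
  simp only [kahlerQuad]
  rw [sum4 (fun i j k l => R i j k l * V i * (starRingEnd ℂ) (V j) * W k * (starRingEnd ℂ) (W l))]
  refine Finset.sum_congr rfl fun a _ => Finset.sum_congr rfl fun b _ =>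
    Finset.sum_congr rfl fun c _ => Finset.sum_congr rfl fun d _ => ?_
  rw [show R c d a b = R a b c d by rw [hsym1 a b c d, hsym2 c b a d]]
  ring

/-- Let `R` be an algebraic Kähler curvature tensor on `ℂⁿ` with nonnegative
orthogonal bisectional curvature.  Let `E₁, E₂ ∈ ℂⁿ` be unit vectors with `⟨E₁, E₂⟩ = 0` and
suppose `R(E₁, Ē₁, E₂, Ē₂) = 0`.  Then for every `Z ∈ ℂⁿ` with `⟨Z, E₁⟩ = 0` one has
`R(E₁, Ē₁, E₂, Z̄) = 0`, and for every `Z ∈ ℂⁿ` with `⟨Z, E₂⟩ = 0` one has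
`R(E₂, Ē₂, E₁, Z̄) = 0`. -/
theorem orthogonal_bisectional_null_claim
    {n : ℕ} (R : Fin n → Fin n → Fin n → Fin n → ℂ)
    (hsym1 : ∀ i j k l, R i j k l = R k j i l)
    (hsym2 : ∀ i j k l, R i j k l = R i l k j)
    (hreal : ∀ i j k l, R i j k l = (starRingEnd ℂ) (R j i l k))
    (hnonneg : ∀ V W : Fin n → ℂ, hermInner V W = 0 → 0 ≤ kahlerQuad R V V W W)
    (E₁ E₂ : Fin n → ℂ)
    (hE₁ : hermInner E₁ E₁ = 1) (hE₂ : hermInner E₂ E₂ = 1)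
    (horth : hermInner E₁ E₂ = 0)
    (hzero : kahlerQuad R E₁ E₁ E₂ E₂ = 0) :
    (∀ Z : Fin n → ℂ, hermInner Z E₁ = 0 → kahlerQuad R E₁ E₁ E₂ Z = 0) ∧
    (∀ Z : Fin n → ℂ, hermInner Z E₂ = 0 → kahlerQuad R E₂ E₂ E₁ Z = 0) := by

  constructor
  · intro Z hZ
    refine key R E₁ E₂ Z horth ?_ (fun X hX => hnonneg E₁ X hX) hzero
    rw [hermInner_conj, hZ, map_zero]
  · intro Z hZ
    have horth' : hermInner E₂ E₁ = 0 := by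
      rw [hermInner_conj, horth, map_zero]
    refine key R E₂ E₁ Z horth' ?_ (fun X hX => hnonneg E₂ X hX) ?_
    · rw [hermInner_conj, hZ, map_zero]
    · rw [quad_swap R hsym1 hsym2]; exact hzero
end

section
/- Let R be an algebraic Kähler curvature tensor on ℂⁿ with nonnegative orthogonal bisectional curvature. Let E₁, E₂ ∈ ℂⁿ be unit vectors with ⟨E₁, E₂⟩ = 0 and suppose R(E₁, Ē₁, E₂, Ē₂) = 0. Then R(E₁, Ē₂, E₁, Ē₁) = R(E₁, Ē₂, E₂, Ē₂). -/
open scoped ComplexOrder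

section Aux

variable {n : ℕ} (R : Fin n → Fin n → Fin n → Fin n → ℂ) (V V' W W' X X' Y Y' : Fin n → ℂ) (c : ℂ)

lemma kq_add₁ : kahlerQuad R (V + V') W X Y = kahlerQuad R V W X Y + kahlerQuad R V' W X Y := by
  simp only [kahlerQuad, Pi.add_apply, mul_add, add_mul, Finset.sum_add_distrib]

lemma kq_add₂ : kahlerQuad R V (W + W') X Y = kahlerQuad R V W X Y + kahlerQuad R V W' X Y := by
  simp only [kahlerQuad, Pi.add_apply, map_add, mul_add, add_mul, Finset.sum_add_distrib]

lemma kq_add₃ : kahlerQuad R V W (X + X') Y = kahlerQuad R V W X Y + kahlerQuad R V W X' Y := by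
  simp only [kahlerQuad, Pi.add_apply, mul_add, add_mul, Finset.sum_add_distrib]

lemma kq_add₄ : kahlerQuad R V W X (Y + Y') = kahlerQuad R V W X Y + kahlerQuad R V W X Y' := by
  simp only [kahlerQuad, Pi.add_apply, map_add, mul_add, add_mul, Finset.sum_add_distrib]

lemma kq_smul₁ : kahlerQuad R (c • V) W X Y = c * kahlerQuad R V W X Y := by
  simp only [kahlerQuad, Pi.smul_apply, smul_eq_mul, Finset.mul_sum]
  exact Finset.sum_congr rfl fun i _ => Finset.sum_congr rfl fun j _ =>
    Finset.sum_congr rfl fun k _ => Finset.sum_congr rfl fun l _ => by ring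

lemma kq_smul₂ : kahlerQuad R V (c • W) X Y = (starRingEnd ℂ) c * kahlerQuad R V W X Y := by
  simp only [kahlerQuad, Pi.smul_apply, smul_eq_mul, map_mul, Finset.mul_sum]
  exact Finset.sum_congr rfl fun i _ => Finset.sum_congr rfl fun j _ =>
    Finset.sum_congr rfl fun k _ => Finset.sum_congr rfl fun l _ => by ring

lemma kq_smul₃ : kahlerQuad R V W (c • X) Y = c * kahlerQuad R V W X Y := by
  simp only [kahlerQuad, Pi.smul_apply, smul_eq_mul, Finset.mul_sum]
  exact Finset.sum_congr rfl fun i _ => Finset.sum_congr rfl fun j _ =>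
    Finset.sum_congr rfl fun k _ => Finset.sum_congr rfl fun l _ => by ring

lemma kq_smul₄ : kahlerQuad R V W X (c • Y) = (starRingEnd ℂ) c * kahlerQuad R V W X Y := by
  simp only [kahlerQuad, Pi.smul_apply, smul_eq_mul, map_mul, Finset.mul_sum]
  exact Finset.sum_congr rfl fun i _ => Finset.sum_congr rfl fun j _ =>
    Finset.sum_congr rfl fun k _ => Finset.sum_congr rfl fun l _ => by ring

lemma hi_add₁ : hermInner (V + V') W = hermInner V W + hermInner V' W := by
  simp only [hermInner, Pi.add_apply, add_mul, Finset.sum_add_distrib]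

lemma hi_add₂ : hermInner V (W + W') = hermInner V W + hermInner V W' := by
  simp only [hermInner, Pi.add_apply, map_add, mul_add, Finset.sum_add_distrib]

lemma hi_smul₁ : hermInner (c • V) W = c * hermInner V W := by
  simp only [hermInner, Pi.smul_apply, smul_eq_mul, Finset.mul_sum, mul_assoc]

lemma hi_smul₂ : hermInner V (c • W) = (starRingEnd ℂ) c * hermInner V W := by
  simp only [hermInner, Pi.smul_apply, smul_eq_mul, map_mul, Finset.mul_sum]
  exact Finset.sum_congr rfl fun i _ => by ring

lemma hi_conj : hermInner V W = (starRingEnd ℂ) (hermInner W V) := by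
  simp only [hermInner, map_sum, map_mul, Complex.conj_conj]
  exact Finset.sum_congr rfl fun i _ => by ring

lemma sum3_rev (f : Fin n → Fin n → Fin n → ℂ) :
    (∑ j, ∑ k, ∑ l, f j k l) = ∑ l, ∑ k, ∑ j, f j k l := by
  calc (∑ j, ∑ k, ∑ l, f j k l) = ∑ j, ∑ l, ∑ k, f j k l :=
        Finset.sum_congr rfl fun j _ => Finset.sum_comm
    _ = ∑ l, ∑ j, ∑ k, f j k l := Finset.sum_comm
    _ = ∑ l, ∑ k, ∑ j, f j k l := Finset.sum_congr rfl fun l _ => Finset.sum_comm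

lemma sum4_swap (g : Fin n → Fin n → Fin n → Fin n → ℂ) :
    (∑ i, ∑ j, ∑ k, ∑ l, g i j k l) = ∑ j, ∑ i, ∑ l, ∑ k, g i j k l := by
  rw [Finset.sum_comm]
  exact Finset.sum_congr rfl fun j _ => Finset.sum_congr rfl fun i _ => Finset.sum_comm

lemma kq_swap24 (hsym2 : ∀ i j k l, R i j k l = R i l k j) :
    kahlerQuad R V W X Y = kahlerQuad R V Y X W := by
  unfold kahlerQuad
  apply Finset.sum_congr rfl; intro i _
  rw [sum3_rev (fun j k l => R i j k l * V i * (starRingEnd ℂ) (Y j) * X k * (starRingEnd ℂ) (W l))]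
  apply Finset.sum_congr rfl; intro j _
  apply Finset.sum_congr rfl; intro k _
  apply Finset.sum_congr rfl; intro l _
  rw [hsym2 i l k j]; ring

lemma kq_conj_s7 (hreal : ∀ i j k l, R i j k l = (starRingEnd ℂ) (R j i l k)) :
    kahlerQuad R V W X Y = (starRingEnd ℂ) (kahlerQuad R W V Y X) := by
  unfold kahlerQuad
  simp only [map_sum, map_mul, Complex.conj_conj]
  rw [sum4_swap (fun i j k l => (starRingEnd ℂ) (R i j k l) * (starRingEnd ℂ) (W i) * V j *
      (starRingEnd ℂ) (Y k) * X l)]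
  apply Finset.sum_congr rfl; intro i _
  apply Finset.sum_congr rfl; intro j _
  apply Finset.sum_congr rfl; intro k _
  apply Finset.sum_congr rfl; intro l _
  rw [show (starRingEnd ℂ) (R j i l k) = R i j k l from (hreal i j k l).symm]; ring

lemma coeff_zero (e1 e2 e3 e4 : ℝ)
    (h : ∀ t : ℝ, 0 ≤ t * e1 + t^2 * e2 + t^3 * e3 + t^4 * e4) : e1 = 0 := by
  set p : ℝ → ℝ := fun t => e1 + t * e2 + t^2 * e3 + t^3 * e4 with hp
  have hc : Continuous p := by continuity
  have hlim : Filter.Tendsto p (nhds 0) (nhds e1) := by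
    have := hc.tendsto 0
    simpa [hp] using this
  have h1 : (0:ℝ) ≤ e1 := by
    refine ge_of_tendsto (hlim.mono_left nhdsWithin_le_nhds :
        Filter.Tendsto p (nhdsWithin 0 (Set.Ioi 0)) (nhds e1)) ?_
    filter_upwards [self_mem_nhdsWithin] with t (ht : 0 < t)
    have := div_nonneg (h t) ht.le
    calc (0:ℝ) ≤ (t * e1 + t^2 * e2 + t^3 * e3 + t^4 * e4) / t := this
      _ = p t := by field_simp [hp]; ring
  have h2 : e1 ≤ 0 := by
    refine le_of_tendsto (hlim.mono_left nhdsWithin_le_nhds :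
        Filter.Tendsto p (nhdsWithin 0 (Set.Iio 0)) (nhds e1)) ?_
    filter_upwards [self_mem_nhdsWithin] with t (ht : t < 0)
    have hne : t ≠ 0 := ht.ne
    have hd := div_nonpos_of_nonneg_of_nonpos (h t) ht.le
    have hpt : p t = (t * e1 + t^2 * e2 + t^3 * e3 + t^4 * e4) / t := by
      field_simp [hp]
      ring
    rw [hpt]; exact hd
  linarith

end Aux

/-- Let `R` be an algebraic Kähler curvature tensor on `ℂⁿ` with nonnegative
orthogonal bisectional curvature.  Let `E₁, E₂ ∈ ℂⁿ` be unit vectors with `⟨E₁, E₂⟩ = 0` and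
suppose `R(E₁, Ē₁, E₂, Ē₂) = 0`.  Then `R(E₁, Ē₂, E₁, Ē₁) = R(E₁, Ē₂, E₂, Ē₂)`. -/
theorem orthogonal_bisectional_claim_two_four
    {n : ℕ} (R : Fin n → Fin n → Fin n → Fin n → ℂ)
    (hsym1 : ∀ i j k l, R i j k l = R k j i l)
    (hsym2 : ∀ i j k l, R i j k l = R i l k j)
    (hreal : ∀ i j k l, R i j k l = (starRingEnd ℂ) (R j i l k))
    (hnonneg : ∀ V W : Fin n → ℂ, hermInner V W = 0 → 0 ≤ kahlerQuad R V V W W)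
    (E₁ E₂ : Fin n → ℂ)
    (hE₁ : hermInner E₁ E₁ = 1) (hE₂ : hermInner E₂ E₂ = 1)
    (horth : hermInner E₁ E₂ = 0)
    (hzero : kahlerQuad R E₁ E₁ E₂ E₂ = 0) :
    kahlerQuad R E₁ E₂ E₁ E₁ = kahlerQuad R E₁ E₂ E₂ E₂ := by
  have hQ1 : kahlerQuad R E₂ E₁ E₂ E₂ = (starRingEnd ℂ) (kahlerQuad R E₁ E₂ E₂ E₂) :=
    kq_conj_s7 R E₂ E₁ E₂ E₂ hreal
  have hQ2 : kahlerQuad R E₁ E₁ E₁ E₂ = kahlerQuad R E₁ E₂ E₁ E₁ :=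
    kq_swap24 R E₁ E₁ E₁ E₂ hsym2
  have hQ3 : kahlerQuad R E₁ E₁ E₂ E₁ = (starRingEnd ℂ) (kahlerQuad R E₁ E₂ E₁ E₁) := by
    rw [kq_conj_s7 R E₁ E₁ E₂ E₁ hreal, hQ2]
  have horth' : hermInner E₂ E₁ = 0 := by rw [hi_conj, horth, map_zero]
  have key : ∀ a : ℂ,
      a * (starRingEnd ℂ) (kahlerQuad R E₁ E₂ E₂ E₂ - kahlerQuad R E₁ E₂ E₁ E₁)
      + (starRingEnd ℂ) a * (kahlerQuad R E₁ E₂ E₂ E₂ - kahlerQuad R E₁ E₂ E₁ E₁) = 0 := by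
    intro a
    set c1 : ℂ := a * kahlerQuad R E₂ E₁ E₂ E₂ + (starRingEnd ℂ) a * kahlerQuad R E₁ E₂ E₂ E₂
        - (starRingEnd ℂ) a * kahlerQuad R E₁ E₁ E₁ E₂ - a * kahlerQuad R E₁ E₁ E₂ E₁ with hd1
    set c2 : ℂ := a * (starRingEnd ℂ) a * kahlerQuad R E₂ E₂ E₂ E₂
        - a * (starRingEnd ℂ) a * kahlerQuad R E₂ E₁ E₁ E₂
        - a * a * kahlerQuad R E₂ E₁ E₂ E₁
        - (starRingEnd ℂ) a * (starRingEnd ℂ) a * kahlerQuad R E₁ E₂ E₁ E₂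
        - a * (starRingEnd ℂ) a * kahlerQuad R E₁ E₂ E₂ E₁
        + a * (starRingEnd ℂ) a * kahlerQuad R E₁ E₁ E₁ E₁ with hd2
    set c3 : ℂ := - (a * (starRingEnd ℂ) a * (starRingEnd ℂ) a * kahlerQuad R E₂ E₂ E₁ E₂)
        - a * a * (starRingEnd ℂ) a * kahlerQuad R E₂ E₂ E₂ E₁
        + a * a * (starRingEnd ℂ) a * kahlerQuad R E₂ E₁ E₁ E₁
        + a * (starRingEnd ℂ) a * (starRingEnd ℂ) a * kahlerQuad R E₁ E₂ E₁ E₁ with hd3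
    set c4 : ℂ := a * a * (starRingEnd ℂ) a * (starRingEnd ℂ) a * kahlerQuad R E₂ E₂ E₁ E₁
        with hd4
    have hg : ∀ t : ℝ, kahlerQuad R (E₁ + ((t:ℂ)*a) • E₂) (E₁ + ((t:ℂ)*a) • E₂)
        (E₂ + (-((t:ℂ)*(starRingEnd ℂ) a)) • E₁) (E₂ + (-((t:ℂ)*(starRingEnd ℂ) a)) • E₁)
        = (t:ℂ) * c1 + (t:ℂ)^2 * c2 + (t:ℂ)^3 * c3 + (t:ℂ)^4 * c4 := by
      intro t
      simp only [kq_add₁, kq_add₂, kq_add₃, kq_add₄, kq_smul₁, kq_smul₂, kq_smul₃, kq_smul₄,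
        map_mul, map_neg, Complex.conj_ofReal, Complex.conj_conj, hd1, hd2, hd3, hd4]
      rw [hzero]
      ring
    have hpos : ∀ t : ℝ, (0:ℂ) ≤ (t:ℂ) * c1 + (t:ℂ)^2 * c2 + (t:ℂ)^3 * c3 + (t:ℂ)^4 * c4 := by
      intro t
      have horthV : hermInner (E₁ + ((t:ℂ)*a) • E₂)
          (E₂ + (-((t:ℂ)*(starRingEnd ℂ) a)) • E₁) = 0 := by
        simp only [hi_add₁, hi_add₂, hi_smul₁, hi_smul₂, horth, horth', hE₁, hE₂,
          map_neg, map_mul, Complex.conj_ofReal, Complex.conj_conj]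
        ring
      have := hnonneg _ _ horthV
      rwa [hg t] at this
    have hre : ∀ t : ℝ, 0 ≤ t * c1.re + t^2 * c2.re + t^3 * c3.re + t^4 * c4.re := by
      intro t
      have := (Complex.le_def.mp (hpos t)).1
      simpa [← Complex.ofReal_pow, Complex.add_re, Complex.mul_re] using this
    have him : ∀ t : ℝ, t * c1.im + t^2 * c2.im + t^3 * c3.im + t^4 * c4.im = 0 := by
      intro t
      have := (Complex.le_def.mp (hpos t)).2
      simpa [← Complex.ofReal_pow, Complex.add_im, Complex.mul_im] using this.symm
    have hc1re : c1.re = 0 := coeff_zero _ _ _ _ hre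
    have hc1im : c1.im = 0 := coeff_zero _ _ _ _ (fun t => le_of_eq (him t).symm)
    have hc1 : c1 = 0 := Complex.ext hc1re hc1im
    have hz : a * kahlerQuad R E₂ E₁ E₂ E₂ + (starRingEnd ℂ) a * kahlerQuad R E₁ E₂ E₂ E₂
        - (starRingEnd ℂ) a * kahlerQuad R E₁ E₁ E₁ E₂ - a * kahlerQuad R E₁ E₁ E₂ E₁ = 0 := by
      rw [← hd1]; exact hc1
    rw [hQ1, hQ2, hQ3] at hz
    rw [map_sub]
    linear_combination hz
  have k1 := key 1
  simp only [one_mul, map_one] at k1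
  have k2 := key Complex.I
  rw [Complex.conj_I] at k2
  have e2 : Complex.I * ((starRingEnd ℂ) (kahlerQuad R E₁ E₂ E₂ E₂ - kahlerQuad R E₁ E₂ E₁ E₁)
      - (kahlerQuad R E₁ E₂ E₂ E₂ - kahlerQuad R E₁ E₂ E₁ E₁)) = 0 := by
    linear_combination k2
  have e3 : (starRingEnd ℂ) (kahlerQuad R E₁ E₂ E₂ E₂ - kahlerQuad R E₁ E₂ E₁ E₁)
      - (kahlerQuad R E₁ E₂ E₂ E₂ - kahlerQuad R E₁ E₂ E₁ E₁) = 0 :=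
    (mul_eq_zero.mp e2).resolve_left Complex.I_ne_zero
  linear_combination (-(1:ℂ)/2) * k1 + ((1:ℂ)/2) * e3
end

section
/- Let n ≥ 2 and let R be an algebraic Kähler curvature tensor on ℂⁿ with nonnegative orthogonal bisectional curvature such that R_{11̄22̄} = 0 (indices refer to the standard orthonormal basis e₁,…,eₙ of ℂⁿ). Define G_{αβ̄γδ̄} = Σ_{μ,ν} ( R_{αβ̄μν̄} R_{νμ̄γδ̄} + R_{αδ̄μν̄} R_{νμ̄γβ̄} − R_{αμ̄γν̄} R_{μβ̄νδ̄} ), with μ, ν ranging over {1,…,n}. Then G_{11̄22̄} = Σ_{3 ≤ i,j ≤ n} R_{11̄ij̄} R_{jī22̄} − Σ_{3 ≤ i,j ≤ n} |R_{1ī2j̄}|² + Σ_{1 ≤ μ,ν ≤ n} |R_{12̄μν̄}|². -/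
open scoped ComplexOrder

/-- The quadratic expression
`G_{αβ̄γδ̄} = Σ_{μ,ν} (R_{αβ̄μν̄} R_{νμ̄γδ̄} + R_{αδ̄μν̄} R_{νμ̄γβ̄} − R_{αμ̄γν̄} R_{μβ̄νδ̄})`
from the evolution equation of the curvature tensor under the Kähler-Ricci flow. -/
noncomputable def GtenOBC {n : ℕ} (R : Fin n → Fin n → Fin n → Fin n → ℂ)
    (a b c d : Fin n) : ℂ :=
  ∑ μ, ∑ ν, (R a b μ ν * R ν μ c d + R a d μ ν * R ν μ c b - R a μ c ν * R μ b ν d)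

namespace OBCAux

def ebas {n : ℕ} (i : Fin n) : Fin n → ℂ := fun x => if x = i then 1 else 0

variable {n : ℕ} (R : Fin n → Fin n → Fin n → Fin n → ℂ)

lemma quad_add1 (V V' W X Y : Fin n → ℂ) :
    kahlerQuad R (V + V') W X Y = kahlerQuad R V W X Y + kahlerQuad R V' W X Y := by
  simp only [kahlerQuad, Pi.add_apply, ← Finset.sum_add_distrib]
  refine Finset.sum_congr rfl fun i _ => Finset.sum_congr rfl fun j _ =>
    Finset.sum_congr rfl fun k _ => Finset.sum_congr rfl fun l _ => by ring

lemma quad_add2 (V W W' X Y : Fin n → ℂ) :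
    kahlerQuad R V (W + W') X Y = kahlerQuad R V W X Y + kahlerQuad R V W' X Y := by
  simp only [kahlerQuad, Pi.add_apply, map_add, ← Finset.sum_add_distrib]
  refine Finset.sum_congr rfl fun i _ => Finset.sum_congr rfl fun j _ =>
    Finset.sum_congr rfl fun k _ => Finset.sum_congr rfl fun l _ => by ring

lemma quad_add3 (V W X X' Y : Fin n → ℂ) :
    kahlerQuad R V W (X + X') Y = kahlerQuad R V W X Y + kahlerQuad R V W X' Y := by
  simp only [kahlerQuad, Pi.add_apply, ← Finset.sum_add_distrib]
  refine Finset.sum_congr rfl fun i _ => Finset.sum_congr rfl fun j _ =>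
    Finset.sum_congr rfl fun k _ => Finset.sum_congr rfl fun l _ => by ring

lemma quad_add4 (V W X Y Y' : Fin n → ℂ) :
    kahlerQuad R V W X (Y + Y') = kahlerQuad R V W X Y + kahlerQuad R V W X Y' := by
  simp only [kahlerQuad, Pi.add_apply, map_add, ← Finset.sum_add_distrib]
  refine Finset.sum_congr rfl fun i _ => Finset.sum_congr rfl fun j _ =>
    Finset.sum_congr rfl fun k _ => Finset.sum_congr rfl fun l _ => by ring

lemma quad_smul1 (t : ℂ) (V W X Y : Fin n → ℂ) :
    kahlerQuad R (t • V) W X Y = t * kahlerQuad R V W X Y := by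
  simp only [kahlerQuad, Pi.smul_apply, smul_eq_mul, Finset.mul_sum]
  refine Finset.sum_congr rfl fun i _ => Finset.sum_congr rfl fun j _ =>
    Finset.sum_congr rfl fun k _ => Finset.sum_congr rfl fun l _ => by ring

lemma quad_smul2 (t : ℂ) (V W X Y : Fin n → ℂ) :
    kahlerQuad R V (t • W) X Y = (starRingEnd ℂ) t * kahlerQuad R V W X Y := by
  simp only [kahlerQuad, Pi.smul_apply, smul_eq_mul, map_mul, Finset.mul_sum]
  refine Finset.sum_congr rfl fun i _ => Finset.sum_congr rfl fun j _ =>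
    Finset.sum_congr rfl fun k _ => Finset.sum_congr rfl fun l _ => by ring

lemma quad_smul3 (t : ℂ) (V W X Y : Fin n → ℂ) :
    kahlerQuad R V W (t • X) Y = t * kahlerQuad R V W X Y := by
  simp only [kahlerQuad, Pi.smul_apply, smul_eq_mul, Finset.mul_sum]
  refine Finset.sum_congr rfl fun i _ => Finset.sum_congr rfl fun j _ =>
    Finset.sum_congr rfl fun k _ => Finset.sum_congr rfl fun l _ => by ring

lemma quad_smul4 (t : ℂ) (V W X Y : Fin n → ℂ) :
    kahlerQuad R V W X (t • Y) = (starRingEnd ℂ) t * kahlerQuad R V W X Y := by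
  simp only [kahlerQuad, Pi.smul_apply, smul_eq_mul, map_mul, Finset.mul_sum]
  refine Finset.sum_congr rfl fun i _ => Finset.sum_congr rfl fun j _ =>
    Finset.sum_congr rfl fun k _ => Finset.sum_congr rfl fun l _ => by ring

lemma quad_single (p q r s : Fin n) :
    kahlerQuad R (ebas p) (ebas q) (ebas r) (ebas s) = R p q r s := by
  simp [kahlerQuad, ebas, apply_ite, mul_ite, ite_mul, mul_zero, zero_mul, mul_one,
    Finset.sum_ite_eq', Finset.mem_univ]

lemma quad_gen (p q r s : Fin n) (t u : ℂ) :
    kahlerQuad R (ebas p + t • ebas q) (ebas p + t • ebas q)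
                (ebas r + u • ebas s) (ebas r + u • ebas s) =
    (R p p r r + t * R q p r r + (starRingEnd ℂ) t * R p q r r
        + t * (starRingEnd ℂ) t * R q q r r)
    + u * (R p p s r + t * R q p s r + (starRingEnd ℂ) t * R p q s r
        + t * (starRingEnd ℂ) t * R q q s r)
    + (starRingEnd ℂ) u * (R p p r s + t * R q p r s + (starRingEnd ℂ) t * R p q r s
        + t * (starRingEnd ℂ) t * R q q r s)
    + u * (starRingEnd ℂ) u * (R p p s s + t * R q p s s + (starRingEnd ℂ) t * R p q s s
        + t * (starRingEnd ℂ) t * R q q s s) := by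
  simp only [quad_add1, quad_add2, quad_add3, quad_add4, quad_smul1, quad_smul2, quad_smul3,
    quad_smul4, quad_single]
  ring

lemma herm_add1 (V V' W : Fin n → ℂ) :
    hermInner (V + V') W = hermInner V W + hermInner V' W := by
  simp [hermInner, add_mul, Finset.sum_add_distrib]

lemma herm_add2 (V W W' : Fin n → ℂ) :
    hermInner V (W + W') = hermInner V W + hermInner V W' := by
  simp [hermInner, mul_add, Finset.sum_add_distrib]

lemma herm_smul1 (t : ℂ) (V W : Fin n → ℂ) :
    hermInner (t • V) W = t * hermInner V W := by
  simp only [hermInner, Pi.smul_apply, smul_eq_mul, Finset.mul_sum]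
  exact Finset.sum_congr rfl fun i _ => by ring

lemma herm_smul2 (t : ℂ) (V W : Fin n → ℂ) :
    hermInner V (t • W) = (starRingEnd ℂ) t * hermInner V W := by
  simp only [hermInner, Pi.smul_apply, smul_eq_mul, map_mul, Finset.mul_sum]
  exact Finset.sum_congr rfl fun i _ => by ring

lemma herm_single (p r : Fin n) :
    hermInner (ebas p) (ebas r) = if p = r then 1 else 0 := by
  simp only [hermInner, ebas, apply_ite, map_one, map_zero, mul_ite, ite_mul, mul_zero,
    zero_mul, one_mul, Finset.sum_ite_eq', Finset.mem_univ, if_true]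
  by_cases h : p = r <;> simp [h, eq_comm]

lemma herm_gen (p q r s : Fin n) (t u : ℂ) :
    hermInner (ebas p + t • ebas q) (ebas r + u • ebas s) =
      (if p = r then 1 else 0) + (starRingEnd ℂ) u * (if p = s then 1 else 0)
        + t * (if q = r then 1 else 0) + t * (starRingEnd ℂ) u * (if q = s then 1 else 0) := by
  simp only [herm_add1, herm_add2, herm_smul1, herm_smul2, herm_single]
  ring

lemma key0' (c d2 d3 d4 : ℂ)
    (h : ∀ ε : ℝ, 0 ≤ (ε : ℂ) * c + (ε : ℂ) ^ 2 * d2 + (ε : ℂ) ^ 3 * d3 + (ε : ℂ) ^ 4 * d4) :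
    c = 0 := by
  have hre : ∀ ε : ℝ, 0 ≤ ε * c.re + ε ^ 2 * d2.re + ε ^ 3 * d3.re + ε ^ 4 * d4.re := by
    intro ε
    have := h ε
    rw [Complex.le_def] at this
    simpa [← Complex.ofReal_pow] using this.1
  have him : ∀ ε : ℝ, ε * c.im + ε ^ 2 * d2.im + ε ^ 3 * d3.im + ε ^ 4 * d4.im = 0 := by
    intro ε
    have := h ε
    rw [Complex.le_def] at this
    simpa [← Complex.ofReal_pow] using this.2.symm
  have h1 : c.im = 0 := by
    have e1 := him 1; have e2 := him (-1); have e3 := him 2; have e4 := him (-2)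
    norm_num at e1 e2 e3 e4
    linarith
  have h2 : c.re = 0 := by
    have hle : c.re ≤ 0 := by
      have ht : Filter.Tendsto (fun ε : ℝ => c.re + ε * d2.re + ε ^ 2 * d3.re + ε ^ 3 * d4.re)
          (nhdsWithin 0 (Set.Iio 0)) (nhds c.re) := by
        have hc : Continuous fun ε : ℝ => c.re + ε * d2.re + ε ^ 2 * d3.re + ε ^ 3 * d4.re := by
          continuity
        simpa using (hc.tendsto 0).mono_left nhdsWithin_le_nhds
      refine le_of_tendsto ht ?_
      filter_upwards [self_mem_nhdsWithin] with ε hε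
      have hε' : ε < 0 := hε
      have := hre ε
      nlinarith [this, hε', mul_pos (neg_pos.2 hε') (neg_pos.2 hε')]
    have hge : 0 ≤ c.re := by
      have ht : Filter.Tendsto (fun ε : ℝ => c.re + ε * d2.re + ε ^ 2 * d3.re + ε ^ 3 * d4.re)
          (nhdsWithin 0 (Set.Ioi 0)) (nhds c.re) := by
        have hc : Continuous fun ε : ℝ => c.re + ε * d2.re + ε ^ 2 * d3.re + ε ^ 3 * d4.re := by
          continuity
        simpa using (hc.tendsto 0).mono_left nhdsWithin_le_nhds
      refine ge_of_tendsto ht ?_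
      filter_upwards [self_mem_nhdsWithin] with ε hε
      have hε' : (0:ℝ) < ε := hε
      have := hre ε
      nlinarith [this, hε']
    linarith
  exact Complex.ext h2 h1

lemma keyC (a b d : ℂ)
    (h : ∀ u : ℂ, 0 ≤ u * a + (starRingEnd ℂ) u * b + u * (starRingEnd ℂ) u * d) :
    a = 0 ∧ b = 0 := by
  have h1 : a + b = 0 := by
    refine key0' (a + b) d 0 0 fun ε => ?_
    have := h (ε : ℂ)
    rw [Complex.conj_ofReal] at this
    calc (0:ℂ) ≤ _ := this
      _ = _ := by ring
  have h2 : Complex.I * (a - b) = 0 := by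
    refine key0' (Complex.I * (a - b)) d 0 0 fun ε => ?_
    have := h ((ε : ℂ) * Complex.I)
    rw [map_mul, Complex.conj_ofReal, Complex.conj_I] at this
    calc (0:ℂ) ≤ _ := this
      _ = _ := by linear_combination (-(ε:ℂ)^2 * d) * Complex.I_sq
  have h3 : a - b = 0 := by
    rcases mul_eq_zero.mp h2 with h | h
    · exact absurd h Complex.I_ne_zero
    · exact h
  constructor
  · linear_combination (h1 + h3) / 2
  · linear_combination (h1 - h3) / 2

lemma keyC4 (a b c20 c11 c02 c30 c21 c12 c03 c40 c31 c22 c13 c04 : ℂ)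
    (h : ∀ u : ℂ, 0 ≤ u * a + (starRingEnd ℂ) u * b
      + u ^ 2 * c20 + u * (starRingEnd ℂ) u * c11 + ((starRingEnd ℂ) u) ^ 2 * c02
      + u ^ 3 * c30 + u ^ 2 * (starRingEnd ℂ) u * c21 + u * ((starRingEnd ℂ) u) ^ 2 * c12
      + ((starRingEnd ℂ) u) ^ 3 * c03
      + u ^ 4 * c40 + u ^ 3 * (starRingEnd ℂ) u * c31 + u ^ 2 * ((starRingEnd ℂ) u) ^ 2 * c22
      + u * ((starRingEnd ℂ) u) ^ 3 * c13 + ((starRingEnd ℂ) u) ^ 4 * c04) :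
    a = 0 ∧ b = 0 := by
  have h1 : a + b = 0 := by
    refine key0' _ (c20 + c11 + c02) (c30 + c21 + c12 + c03) (c40 + c31 + c22 + c13 + c04)
      fun ε => ?_
    have := h (ε : ℂ)
    rw [Complex.conj_ofReal] at this
    calc (0:ℂ) ≤ _ := this
      _ = _ := by ring
  have h2 : Complex.I * (a - b) = 0 := by
    refine key0' _ (-c20 + c11 - c02) (Complex.I * (-c30 + c21 - c12 + c03))
      (c40 - c31 + c22 - c13 + c04) fun ε => ?_
    have := h ((ε : ℂ) * Complex.I)
    rw [map_mul, Complex.conj_ofReal, Complex.conj_I] at this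
    calc (0:ℂ) ≤ _ := this
      _ = _ := by
        linear_combination ((ε:ℂ)^2*(c20 - c11 + c02) + (ε:ℂ)^3*Complex.I*(c30 - c21 + c12 - c03)
          + (ε:ℂ)^4*(Complex.I^2 - 1)*(c40 - c31 + c22 - c13 + c04)) * Complex.I_sq
  have h3 : a - b = 0 := by
    rcases mul_eq_zero.mp h2 with h | h
    · exact absurd h Complex.I_ne_zero
    · exact h
  constructor
  · linear_combination (h1 + h3) / 2
  · linear_combination (h1 - h3) / 2

lemma sum_split (z0 z1 : Fin n) (hz0 : (z0 : ℕ) = 0) (hz1 : (z1 : ℕ) = 1) (f : Fin n → ℂ) :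
    ∑ x, f x = f z0 + f z1
      + ∑ x ∈ Finset.univ.filter (fun x : Fin n => 2 ≤ (x : ℕ)), f x := by
  have h : (Finset.univ : Finset (Fin n)) =
      insert z0 (insert z1 (Finset.univ.filter (fun x : Fin n => 2 ≤ (x : ℕ)))) := by
    ext x
    simp only [Finset.mem_univ, Finset.mem_insert, Finset.mem_filter, true_iff, true_and]
    rw [Fin.ext_iff, Fin.ext_iff, hz0, hz1]
    omega
  have h1 : z1 ∉ Finset.univ.filter (fun x : Fin n => 2 ≤ (x : ℕ)) := by
    simp [Finset.mem_filter, hz1]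
  have h0 : z0 ∉ insert z1 (Finset.univ.filter (fun x : Fin n => 2 ≤ (x : ℕ))) := by
    simp only [Finset.mem_insert, Finset.mem_filter, Finset.mem_univ, true_and]
    rw [Fin.ext_iff, hz0, hz1]
    omega
  conv_lhs => rw [h]
  rw [Finset.sum_insert h0, Finset.sum_insert h1]
  ring


theorem main_aux (n : ℕ) (R : Fin n → Fin n → Fin n → Fin n → ℂ)
    (hsym1 : ∀ i j k l, R i j k l = R k j i l)
    (hsym2 : ∀ i j k l, R i j k l = R i l k j)
    (hreal : ∀ i j k l, R i j k l = (starRingEnd ℂ) (R j i l k))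
    (hnonneg : ∀ V W : Fin n → ℂ, hermInner V W = 0 → 0 ≤ kahlerQuad R V V W W)
    (z0 z1 : Fin n) (hz0 : (z0 : ℕ) = 0) (hz1 : (z1 : ℕ) = 1)
    (hzero : R z0 z0 z1 z1 = 0) :
    GtenOBC R z0 z0 z1 z1 =
      (∑ i ∈ Finset.univ.filter (fun i : Fin n => 2 ≤ (i : ℕ)),
        ∑ j ∈ Finset.univ.filter (fun j : Fin n => 2 ≤ (j : ℕ)),
          R z0 z0 i j * R j i z1 z1)
      - ((∑ i ∈ Finset.univ.filter (fun i : Fin n => 2 ≤ (i : ℕ)),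
          ∑ j ∈ Finset.univ.filter (fun j : Fin n => 2 ≤ (j : ℕ)),
            ‖R z0 i z1 j‖ ^ 2 : ℝ) : ℂ)
      + ((∑ μ : Fin n, ∑ ν : Fin n, ‖R z0 z1 μ ν‖ ^ 2 : ℝ) : ℂ) := by
  have hz0ne1 : ¬ z0 = z1 := by rw [Fin.ext_iff, hz0, hz1]; omega
  have hz1ne0 : ¬ z1 = z0 := by rw [Fin.ext_iff, hz0, hz1]; omega
  -- first order vanishing facts
  have hF2 : ∀ μ : Fin n, ¬ μ = z1 → R μ z0 z1 z1 = 0 ∧ R z0 μ z1 z1 = 0 := by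
    intro μ hμ
    refine keyC _ _ (R μ μ z1 z1) fun t => ?_
    have horth : hermInner (ebas z0 + t • ebas μ) (ebas z1 + (0:ℂ) • ebas z1) = 0 := by
      rw [herm_gen]; simp [hz0ne1, hμ]
    have hq := hnonneg _ _ horth
    rw [quad_gen] at hq
    calc (0:ℂ) ≤ _ := hq
      _ = _ := by rw [hzero]; simp only [map_zero]; ring
  have hF1 : ∀ ν : Fin n, ¬ ν = z0 → R z0 z0 ν z1 = 0 ∧ R z0 z0 z1 ν = 0 := by
    intro ν hν
    refine keyC _ _ (R z0 z0 ν ν) fun u => ?_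
    have horth : hermInner (ebas z0 + (0:ℂ) • ebas z0) (ebas z1 + u • ebas ν) = 0 := by
      have hz0ν : ¬ z0 = ν := fun h => hν h.symm
      rw [herm_gen]; simp [hz0ne1, hz0ν]
    have hq := hnonneg _ _ horth
    rw [quad_gen] at hq
    calc (0:ℂ) ≤ _ := hq
      _ = _ := by rw [hzero]; simp only [map_zero]; ring
  have hz1100 : R z1 z1 z0 z0 = 0 := by
    rw [hsym1 z1 z1 z0 z0, hsym2 z0 z1 z1 z0]; exact hzero
  have hF4 : ∀ ν : Fin n, ¬ ν = z0 → ¬ ν = z1 → R z1 z1 ν z0 = 0 ∧ R z1 z1 z0 ν = 0 := by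
    intro ν hν0 hν1
    refine keyC _ _ (R z1 z1 ν ν) fun u => ?_
    have horth : hermInner (ebas z1 + (0:ℂ) • ebas z1) (ebas z0 + u • ebas ν) = 0 := by
      have hz1ν : ¬ z1 = ν := fun h => hν1 h.symm
      rw [herm_gen]; simp [hz1ne0, hz1ν]
    have hq := hnonneg _ _ horth
    rw [quad_gen] at hq
    calc (0:ℂ) ≤ _ := hq
      _ = _ := by rw [hz1100]; simp only [map_zero]; ring
  have hF3 : R z1 z0 z1 z1 = R z0 z0 z1 z0 ∧ R z0 z1 z1 z1 = R z0 z0 z0 z1 := by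
    have := keyC4 (R z1 z0 z1 z1 - R z0 z0 z1 z0) (R z0 z1 z1 z1 - R z0 z0 z0 z1)
      (-(R z1 z0 z1 z0))
      (R z1 z1 z1 z1 - R z1 z0 z0 z1 - R z0 z1 z1 z0 + R z0 z0 z0 z0)
      (-(R z0 z1 z0 z1))
      0 (-(R z1 z1 z1 z0) + R z1 z0 z0 z0) (-(R z1 z1 z0 z1) + R z0 z1 z0 z0) 0
      0 0 (R z1 z1 z0 z0) 0 0
      (fun w => ?_)
    · exact ⟨by linear_combination this.1, by linear_combination this.2⟩
    have horth : hermInner (ebas z0 + w • ebas z1)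
        (ebas z1 + (-(starRingEnd ℂ) w) • ebas z0) = 0 := by
      rw [herm_gen]
      simp [hz0ne1, hz1ne0, Complex.conj_conj]
    have hq := hnonneg _ _ horth
    rw [quad_gen] at hq
    calc (0:ℂ) ≤ _ := hq
      _ = _ := by rw [hzero]; simp only [map_neg, Complex.conj_conj]; ring
  obtain ⟨hF3b, hF3a⟩ := hF3
  -- conjugation facts
  have hnorm : ∀ z : ℂ, ((‖z‖ ^ 2 : ℝ) : ℂ) = z * (starRingEnd ℂ) z := fun z => by
    rw [Complex.mul_conj, Complex.sq_norm]
  have hconjB : ∀ μ ν : Fin n, R ν μ z1 z0 = (starRingEnd ℂ) (R z0 z1 μ ν) := by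
    intro μ ν
    rw [hreal ν μ z1 z0, hsym1 μ ν z0 z1, hsym2 z0 ν μ z1]
  have hconjC : ∀ μ ν : Fin n, R μ z0 ν z1 = (starRingEnd ℂ) (R z0 μ z1 ν) := fun μ ν =>
    hreal μ z0 ν z1
  have hconj0 : R z0 z0 z1 z0 = (starRingEnd ℂ) (R z0 z0 z0 z1) := hreal z0 z0 z1 z0
  -- the difference tensor
  set D : Fin n → Fin n → ℂ := fun μ ν =>
    R z0 z0 μ ν * R ν μ z1 z1 - R z0 μ z1 ν * (starRingEnd ℂ) (R z0 μ z1 ν) with hD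
  -- main sum identity
  have hmain : ∑ μ, ∑ ν, D μ ν =
      ∑ μ ∈ Finset.univ.filter (fun μ : Fin n => 2 ≤ (μ : ℕ)),
        ∑ ν ∈ Finset.univ.filter (fun ν : Fin n => 2 ≤ (ν : ℕ)), D μ ν := by
    have hrow : ∀ μ ∈ Finset.univ.filter (fun μ : Fin n => 2 ≤ (μ : ℕ)),
        ∑ ν, D μ ν = ∑ ν ∈ Finset.univ.filter (fun ν : Fin n => 2 ≤ (ν : ℕ)), D μ ν := by
      intro μ hμ
      have hμ2 : 2 ≤ (μ : ℕ) := (Finset.mem_filter.mp hμ).2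
      have hμ0 : ¬ μ = z0 := by rw [Fin.ext_iff, hz0]; omega
      have hμ1 : ¬ μ = z1 := by rw [Fin.ext_iff, hz1]; omega
      have e1 : D μ z0 = 0 := by
        simp only [hD]
        rw [(hF2 μ hμ1).2, hsym2 z0 μ z1 z0, (hF1 μ hμ0).2]
        simp
      have e2 : D μ z1 = 0 := by
        simp only [hD]
        rw [(hF1 μ hμ0).1, (hF2 μ hμ1).2]
        simp
      rw [sum_split z0 z1 hz0 hz1 (D μ), e1, e2]
      ring
    rw [sum_split z0 z1 hz0 hz1 (fun μ => ∑ ν, D μ ν)]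
    rw [Finset.sum_congr rfl hrow]
    have hrow0 : ∑ ν, D z0 ν = D z0 z0 + D z0 z1 := by
      rw [sum_split z0 z1 hz0 hz1 (D z0)]
      have : ∑ ν ∈ Finset.univ.filter (fun ν : Fin n => 2 ≤ (ν : ℕ)), D z0 ν = 0 := by
        refine Finset.sum_eq_zero fun ν hν => ?_
        have hν2 : 2 ≤ (ν : ℕ) := (Finset.mem_filter.mp hν).2
        have hν0 : ¬ ν = z0 := by rw [Fin.ext_iff, hz0]; omega
        have hν1 : ¬ ν = z1 := by rw [Fin.ext_iff, hz1]; omega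
        simp only [hD]
        rw [(hF2 ν hν1).1, (hF1 ν hν0).2]
        simp
      rw [this]; ring
    have hrow1 : ∑ ν, D z1 ν = D z1 z0 + D z1 z1 := by
      rw [sum_split z0 z1 hz0 hz1 (D z1)]
      have : ∑ ν ∈ Finset.univ.filter (fun ν : Fin n => 2 ≤ (ν : ℕ)), D z1 ν = 0 := by
        refine Finset.sum_eq_zero fun ν hν => ?_
        have hν2 : 2 ≤ (ν : ℕ) := (Finset.mem_filter.mp hν).2
        have hν0 : ¬ ν = z0 := by rw [Fin.ext_iff, hz0]; omega
        have hν1 : ¬ ν = z1 := by rw [Fin.ext_iff, hz1]; omega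
        simp only [hD]
        rw [(hF1 ν hν0).2, hsym1 z0 z1 z1 ν, (hF4 ν hν0 hν1).2]
        simp
      rw [this]; ring
    rw [hrow0, hrow1]
    have hcorner : D z0 z0 + D z0 z1 + (D z1 z0 + D z1 z1) = 0 := by
      simp only [hD]
      rw [hsym2 z0 z1 z1 z0]
      rw [hzero, hF3a, hF3b, hconj0]
      simp only [map_zero, Complex.conj_conj]
      ring
    linear_combination hcorner
  -- assemble
  rw [GtenOBC]
  have hsummand : ∀ μ : Fin n, ∀ ν : Fin n,
      R z0 z0 μ ν * R ν μ z1 z1 + R z0 z1 μ ν * R ν μ z1 z0 - R z0 μ z1 ν * R μ z0 ν z1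
      = D μ ν + R z0 z1 μ ν * (starRingEnd ℂ) (R z0 z1 μ ν) := by
    intro μ ν
    simp only [hD]
    rw [hconjB μ ν, hconjC μ ν]
    ring
  calc ∑ μ, ∑ ν, (R z0 z0 μ ν * R ν μ z1 z1 + R z0 z1 μ ν * R ν μ z1 z0
          - R z0 μ z1 ν * R μ z0 ν z1)
      = (∑ μ, ∑ ν, D μ ν) + ∑ μ, ∑ ν, R z0 z1 μ ν * (starRingEnd ℂ) (R z0 z1 μ ν) := by
        rw [← Finset.sum_add_distrib]
        refine Finset.sum_congr rfl fun μ _ => ?_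
        rw [← Finset.sum_add_distrib]
        exact Finset.sum_congr rfl fun ν _ => hsummand μ ν
    _ = _ := by
        rw [hmain]
        have hc2 : ((∑ i ∈ Finset.univ.filter (fun i : Fin n => 2 ≤ (i : ℕ)),
            ∑ j ∈ Finset.univ.filter (fun j : Fin n => 2 ≤ (j : ℕ)),
              ‖R z0 i z1 j‖ ^ 2 : ℝ) : ℂ)
            = ∑ i ∈ Finset.univ.filter (fun i : Fin n => 2 ≤ (i : ℕ)),
            ∑ j ∈ Finset.univ.filter (fun j : Fin n => 2 ≤ (j : ℕ)),
              R z0 i z1 j * (starRingEnd ℂ) (R z0 i z1 j) := by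
          push_cast
          refine Finset.sum_congr rfl fun i _ => Finset.sum_congr rfl fun j _ => ?_
          rw [← Complex.ofReal_pow, hnorm]
        have hc3 : ((∑ μ : Fin n, ∑ ν : Fin n, ‖R z0 z1 μ ν‖ ^ 2 : ℝ) : ℂ)
            = ∑ μ : Fin n, ∑ ν : Fin n, R z0 z1 μ ν * (starRingEnd ℂ) (R z0 z1 μ ν) := by
          push_cast
          refine Finset.sum_congr rfl fun i _ => Finset.sum_congr rfl fun j _ => ?_
          rw [← Complex.ofReal_pow, hnorm]
        rw [hc2, hc3]
        simp only [hD]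
        rw [← Finset.sum_sub_distrib]
        refine congrArg₂ (· + ·) (Finset.sum_congr rfl fun i _ => ?_) rfl
        rw [← Finset.sum_sub_distrib]

end OBCAux

/-- (Claim 2.5 in the proof of the Cao–Hamilton theorem.)  Let `n ≥ 2` and
let `R` be an algebraic Kähler curvature tensor on `ℂⁿ` with nonnegative orthogonal
bisectional curvature such that `R_{11̄22̄} = 0`.  Then
`G_{11̄22̄} = Σ_{3 ≤ i,j ≤ n} R_{11̄ij̄} R_{jī22̄} − Σ_{3 ≤ i,j ≤ n} |R_{1ī2j̄}|²
  + Σ_{1 ≤ μ,ν ≤ n} |R_{12̄μν̄}|²`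
(here the `n`-dimensional indices `1, 2` correspond to `0, 1 : Fin n`, and the range
`3 ≤ i ≤ n` corresponds to `2 ≤ (i : ℕ)` for `i : Fin n`). -/
theorem G_eleven_twentytwo_formula
    (n : ℕ) (hn : 2 ≤ n) (R : Fin n → Fin n → Fin n → Fin n → ℂ)
    (hsym1 : ∀ i j k l, R i j k l = R k j i l)
    (hsym2 : ∀ i j k l, R i j k l = R i l k j)
    (hreal : ∀ i j k l, R i j k l = (starRingEnd ℂ) (R j i l k))
    (hnonneg : ∀ V W : Fin n → ℂ, hermInner V W = 0 → 0 ≤ kahlerQuad R V V W W)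
    (hzero : R ⟨0, by omega⟩ ⟨0, by omega⟩ ⟨1, by omega⟩ ⟨1, by omega⟩ = 0) :
    GtenOBC R ⟨0, by omega⟩ ⟨0, by omega⟩ ⟨1, by omega⟩ ⟨1, by omega⟩ =
      (∑ i ∈ Finset.univ.filter (fun i : Fin n => 2 ≤ (i : ℕ)),
        ∑ j ∈ Finset.univ.filter (fun j : Fin n => 2 ≤ (j : ℕ)),
          R ⟨0, by omega⟩ ⟨0, by omega⟩ i j * R j i ⟨1, by omega⟩ ⟨1, by omega⟩)
      - ((∑ i ∈ Finset.univ.filter (fun i : Fin n => 2 ≤ (i : ℕ)),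
          ∑ j ∈ Finset.univ.filter (fun j : Fin n => 2 ≤ (j : ℕ)),
            ‖R ⟨0, by omega⟩ i ⟨1, by omega⟩ j‖ ^ 2 : ℝ) : ℂ)
      + ((∑ μ : Fin n, ∑ ν : Fin n,
            ‖R ⟨0, by omega⟩ ⟨1, by omega⟩ μ ν‖ ^ 2 : ℝ) : ℂ) :=
  OBCAux.main_aux n R hsym1 hsym2 hreal hnonneg ⟨0, by omega⟩ ⟨1, by omega⟩ rfl rfl hzero
end

section
/- Let n ≥ 1 be a natural number, let κ > 0, r > 0, α > κ be real numbers, and let V: (0, r] → ℝ be a function. Suppose that (i) for every a ∈ (0, r], if V(a) ≤ 3ⁿ · V(a/2) then V(a) ≥ κ · aⁿ, and (ii) V(r/2^k)/(r/2^k)ⁿ → α as k → ∞. Then V(r) ≥ κ · rⁿ. -/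
/-- (The inductive volume-comparison argument of B.-L. Chen used in the
proof of the strong no local collapsing theorem.)  Let `n ≥ 1` be a natural number, let
`κ > 0`, `r > 0`, `α > κ` be real numbers, and let `V : (0, r] → ℝ` be a function.  Suppose
that (i) for every `a ∈ (0, r]`, if `V(a) ≤ 3ⁿ · V(a/2)` then `V(a) ≥ κ · aⁿ`, and (ii)
`V(r/2^k)/(r/2^k)ⁿ → α` as `k → ∞`.  Then `V(r) ≥ κ · rⁿ`. -/
theorem volume_noncollapsing_induction
    (n : ℕ) (hn : 1 ≤ n) (κ r α : ℝ) (hκ : 0 < κ) (hr : 0 < r) (hα : κ < α)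
    (V : ℝ → ℝ)
    (hdoubling : ∀ a : ℝ, 0 < a → a ≤ r → V a ≤ 3 ^ n * V (a / 2) → κ * a ^ n ≤ V a)
    (hlimit : Filter.Tendsto (fun k : ℕ => V (r / 2 ^ k) / (r / 2 ^ k) ^ n)
      Filter.atTop (nhds α)) :
    κ * r ^ n ≤ V r := by
  by_contra hcon
  push_neg at hcon
  have h3 : (0:ℝ) < 3 ^ n := by positivity
  have key : ∀ k : ℕ, V (r / 2 ^ k) < κ * r ^ n / 3 ^ (n * k) := by
    intro k
    induction k with
    | zero => simpa using hcon
    | succ k ih =>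
      have hapos : 0 < r / 2 ^ k := by positivity
      have haler : r / 2 ^ k ≤ r := by
        rw [div_le_iff₀ (by positivity)]
        nlinarith [one_le_pow₀ (by norm_num : (1:ℝ) ≤ 2) (n := k)]
      have hpow : (r / 2 ^ k) ^ n = r ^ n / 2 ^ (n * k) := by
        rw [div_pow, ← pow_mul, mul_comm k n]
      have h2le3 : (2:ℝ) ^ (n*k) ≤ 3 ^ (n*k) :=
        pow_le_pow_left₀ (by norm_num) (by norm_num) _
      have h2pos : (0:ℝ) < 2 ^ (n*k) := by positivity
      have hVa_lt : V (r / 2 ^ k) < κ * (r / 2 ^ k) ^ n := by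
        have hle : κ * r ^ n / 3 ^ (n*k) ≤ κ * (r ^ n / 2 ^ (n*k)) := by
          rw [mul_div_assoc]
          exact mul_le_mul_of_nonneg_left
            (div_le_div_of_nonneg_left (by positivity) h2pos h2le3) hκ.le
        rw [hpow]
        linarith
      have hcontra : 3 ^ n * V (r / 2 ^ k / 2) < V (r / 2 ^ k) := by
        by_contra hle
        push_neg at hle
        exact absurd (hdoubling _ hapos haler hle) (not_le.mpr hVa_lt)
      have heq : r / 2 ^ k / 2 = r / 2 ^ (k+1) := by
        rw [pow_succ]; ring
      rw [← heq]
      have : V (r / 2 ^ k / 2) < V (r / 2 ^ k) / 3 ^ n := by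
        rw [lt_div_iff₀ h3]; linarith
      have h3eq : κ * r ^ n / 3 ^ (n * (k+1)) = (κ * r ^ n / 3 ^ (n*k)) / 3 ^ n := by
        rw [div_div, ← pow_add]; ring_nf
      rw [h3eq]
      calc V (r / 2 ^ k / 2) < V (r / 2 ^ k) / 3 ^ n := this
        _ < (κ * r ^ n / 3 ^ (n*k)) / 3 ^ n := by gcongr
  have hratio : ∀ k : ℕ, V (r / 2 ^ k) / (r / 2 ^ k) ^ n ≤ κ * ((2/3 : ℝ) ^ n) ^ k := by
    intro k
    have hpos : (0:ℝ) < (r / 2 ^ k) ^ n := by positivity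
    rw [div_le_iff₀ hpos]
    have heq : κ * ((2/3 : ℝ) ^ n) ^ k * (r / 2 ^ k) ^ n = κ * r ^ n / 3 ^ (n * k) := by
      rw [← pow_mul, div_pow, div_pow, ← pow_mul, mul_comm k n]
      field_simp
    rw [heq]
    exact (key k).le
  have hgeo : Filter.Tendsto (fun k : ℕ => κ * ((2/3 : ℝ) ^ n) ^ k)
      Filter.atTop (nhds 0) := by
    have h1 : ((2:ℝ)/3) ^ n < 1 := pow_lt_one₀ (by norm_num) (by norm_num) (by omega)
    have := tendsto_pow_atTop_nhds_zero_of_lt_one (by positivity : (0:ℝ) ≤ (2/3:ℝ)^n) h1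
    simpa using this.const_mul κ
  have : α ≤ 0 := le_of_tendsto_of_tendsto' hlimit hgeo hratio
  linarith
end
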